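/- (Desargues' involution theorem for a pencil of conics.) Let 𝒞 = {(x,y) ∈ ℝ² : a·x² + b·x·y + c·y² + d·x + e·y + g = 0} with (a,b,c) ≠ (0,0,0). Let B, C, D, E be four pairwise distinct points of 𝒞, no three collinear. Let Δ be a line that is not parallel to any of the six side lines BC, DE, BE, CD, BD, CE and does not pass through any point of pairwise intersection of these six lines, and let L and M be two distinct points of 𝒞 ∩ Δ. Let I = Δ∩BC, K = Δ∩DE, P = Δ∩BE, Q = Δ∩CD. Then QL·QM·PI·PK = PL·PM·QI·QK. -/

import Mathlib

noncomputable section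

open EuclideanGeometry

abbrev Pt : Type := EuclideanSpace ℝ (Fin 2)

/-- The affine line through two points of the Euclidean plane. -/
def lineThrough (x y : Pt) : AffineSubspace ℝ Pt := affineSpan ℝ {x, y}

/-- A subset of the plane is a line if it is the affine span of two distinct points. -/
def IsLine (s : AffineSubspace ℝ Pt) : Prop := ∃ x y : Pt, x ≠ y ∧ s = lineThrough x y

/-- The six side lines of a complete quadrangle B, C, D, E. -/
def sides (B C D E : Pt) : Set (AffineSubspace ℝ Pt) :=
  {lineThrough B C, lineThrough D E, lineThrough B E,
   lineThrough C D, lineThrough B D, lineThrough C E}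

/-! ### Auxiliary algebraic machinery -/

/-- The standard linear functional vanishing on the line through `(u0,u1)` and `(w0,w1)`. -/
def Lf (u0 u1 w0 w1 x y : ℝ) : ℝ := (w1-u1)*(x-u0) - (w0-u0)*(y-u1)

/-- A general conic polynomial. -/
def Qf (a b c d e g x y : ℝ) : ℝ := a*x^2 + b*(x*y) + c*y^2 + d*x + e*y + g

lemma pt_ext {x y : Pt} (h0 : x 0 = y 0) (h1 : x 1 = y 1) : x = y := by
  refine PiLp.ext fun i => ?_
  fin_cases i
  · exact h0
  · exact h1

lemma pt_ne_coords {x y : Pt} (h : x ≠ y) : x 0 ≠ y 0 ∨ x 1 ≠ y 1 := by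
  by_contra hc
  push_neg at hc
  exact h (pt_ext hc.1 hc.2)

lemma mem_lineThrough_iff {U W Z : Pt} : Z ∈ lineThrough U W ↔ ∃ t : ℝ, Z = t • (W - U) + U := by
  unfold lineThrough
  constructor
  · intro h
    have h2 : (Z - U) +ᵥ U ∈ line[ℝ, U, W] := by simpa using h
    obtain ⟨r, hr⟩ := (vadd_left_mem_affineSpan_pair).1 h2
    exact ⟨r, by rw [vsub_eq_sub] at hr; rw [hr]; abel⟩
  · rintro ⟨t, rfl⟩
    have := AffineMap.lineMap_mem_affineSpan_pair (k := ℝ) t U W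
    simpa [AffineMap.lineMap_apply, vsub_eq_sub, vadd_eq_add] using this

lemma rep_coord {Z U W : Pt} {t : ℝ} (h : Z = t • (W - U) + U) :
    Z 0 = t*(W 0 - U 0) + U 0 ∧ Z 1 = t*(W 1 - U 1) + U 1 := by
  constructor <;> rw [h] <;>
    simp [PiLp.add_apply, PiLp.smul_apply, PiLp.sub_apply, smul_eq_mul]

lemma dist_param (x v : Pt) (s t : ℝ) : dist (s • v + x) (t • v + x) = |s - t| * ‖v‖ := by
  rw [dist_eq_norm]
  have h : (s • v + x) - (t • v + x) = (s - t) • v := by module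
  rw [h, norm_smul, Real.norm_eq_abs]

lemma left_mem_lineThrough (U W : Pt) : U ∈ lineThrough U W :=
  left_mem_affineSpan_pair ℝ U W

lemma right_mem_lineThrough (U W : Pt) : W ∈ lineThrough U W :=
  right_mem_affineSpan_pair ℝ U W

lemma collinear_of_mem_line {Z U W : Pt} (h : Z ∈ lineThrough U W) :
    Collinear ℝ ({Z, U, W} : Set Pt) :=
  collinear_insert_of_mem_affineSpan_pair h

lemma collinear_of_cross (P Q R : Pt)
    (h : (Q 0 - P 0)*(R 1 - P 1) - (Q 1 - P 1)*(R 0 - P 0) = 0) :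
    Collinear ℝ ({P, Q, R} : Set Pt) := by
  rw [collinear_iff_exists_forall_eq_smul_vadd]
  by_cases hQP : Q = P
  · refine ⟨P, R - P, ?_⟩
    rintro p hp
    simp only [Set.mem_insert_iff, Set.mem_singleton_iff] at hp
    rcases hp with rfl | rfl | rfl
    · exact ⟨0, by simp⟩
    · exact ⟨0, by simp [hQP]⟩
    · exact ⟨1, by simp⟩
  · refine ⟨P, Q - P, ?_⟩
    rintro p hp
    simp only [Set.mem_insert_iff, Set.mem_singleton_iff] at hp
    rcases hp with rfl | rfl | rfl
    · exact ⟨0, by simp⟩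
    · exact ⟨1, by simp⟩
    · by_cases hne : Q 0 = P 0
      · have hne1 : Q 1 ≠ P 1 := by
          intro h1; exact hQP (pt_ext hne h1)
        have h0 : Q 1 - P 1 ≠ 0 := sub_ne_zero.2 hne1
        refine ⟨(p 1 - P 1)/(Q 1 - P 1), pt_ext ?_ ?_⟩ <;>
          simp only [vadd_eq_add, PiLp.add_apply, PiLp.smul_apply, PiLp.sub_apply, smul_eq_mul]
        · have hp0 : (Q 1 - P 1) * (p 0 - P 0) = 0 := by
            linear_combination -h + (p 1 - P 1)*hne
          have hpP : p 0 = P 0 := by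
            rcases mul_eq_zero.1 hp0 with h3 | h3
            · exact absurd h3 h0
            · linarith
          rw [hne, hpP]; ring
        · field_simp; ring
      · have h0 : Q 0 - P 0 ≠ 0 := sub_ne_zero.2 hne
        refine ⟨(p 0 - P 0)/(Q 0 - P 0), pt_ext ?_ ?_⟩ <;>
          simp only [vadd_eq_add, PiLp.add_apply, PiLp.smul_apply, PiLp.sub_apply, smul_eq_mul]
        · field_simp; ring
        · field_simp
          linear_combination h

lemma par_of_cross (X Y U W : Pt) (hXY : X ≠ Y) (hUW : U ≠ W)
    (h : (Y 0 - X 0)*(W 1 - U 1) - (Y 1 - X 1)*(W 0 - U 0) = 0) :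
    AffineSubspace.Parallel (lineThrough X Y) (lineThrough U W) := by
  unfold lineThrough
  rw [AffineSubspace.affineSpan_pair_parallel_iff_vectorSpan_eq, vectorSpan_pair, vectorSpan_pair]
  have hv : Y - X ≠ 0 := sub_ne_zero.2 (Ne.symm hXY)
  have hw : W - U ≠ 0 := sub_ne_zero.2 (Ne.symm hUW)
  have hex : ∃ r : ℝ, r ≠ 0 ∧ W - U = r • (Y - X) := by
    by_cases h0 : Y 0 = X 0
    · have h1 : Y 1 ≠ X 1 := fun hh => hXY (pt_ext h0.symm hh.symm)
      have h1' : Y 1 - X 1 ≠ 0 := sub_ne_zero.2 h1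
      have hW0 : W 0 - U 0 = 0 := by
        have h2 : (Y 1 - X 1) * (W 0 - U 0) = 0 := by
          linear_combination -h + (W 1 - U 1) * h0
        rcases mul_eq_zero.1 h2 with h3 | h3
        · exact absurd h3 h1'
        · exact h3
      refine ⟨(W 1 - U 1)/(Y 1 - X 1), ?_, pt_ext ?_ ?_⟩
      · intro hr
        apply hw
        have hW1 : W 1 - U 1 = 0 := by
          field_simp at hr; linarith
        exact pt_ext (by simpa [PiLp.sub_apply] using hW0)
          (by simpa [PiLp.sub_apply] using hW1)
      · simp only [PiLp.smul_apply, PiLp.sub_apply, smul_eq_mul]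
        rw [show Y 0 - X 0 = 0 by linarith]
        simpa [PiLp.sub_apply] using hW0
      · simp only [PiLp.smul_apply, PiLp.sub_apply, smul_eq_mul]
        field_simp
    · have h0' : Y 0 - X 0 ≠ 0 := sub_ne_zero.2 h0
      refine ⟨(W 0 - U 0)/(Y 0 - X 0), ?_, pt_ext ?_ ?_⟩
      · intro hr
        apply hw
        have hW0 : W 0 - U 0 = 0 := by field_simp at hr; linarith
        have hW1 : (Y 0 - X 0) * (W 1 - U 1) = 0 := by linear_combination h + (Y 1 - X 1)*hW0
        have hW1' : W 1 - U 1 = 0 := by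
          rcases mul_eq_zero.1 hW1 with h3 | h3
          · exact absurd h3 h0'
          · exact h3
        exact pt_ext (by simpa [PiLp.sub_apply] using hW0)
          (by simpa [PiLp.sub_apply] using hW1')
      · simp only [PiLp.smul_apply, PiLp.sub_apply, smul_eq_mul]
        field_simp
      · simp only [PiLp.smul_apply, PiLp.sub_apply, smul_eq_mul]
        field_simp
        linear_combination h
  obtain ⟨r, hr, hWU⟩ := hex
  rw [show X -ᵥ Y = -(Y - X) from by simp [vsub_eq_sub],
      show U -ᵥ W = -(W - U) from by simp [vsub_eq_sub]]
  rw [hWU]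
  rw [show -(r • (Y - X)) = (-r) • (Y - X) from by module,
      show -(Y - X) = (-1 : ℝ) • (Y - X) from by module]
  rw [Submodule.span_singleton_smul_eq (isUnit_iff_ne_zero.2 (by norm_num : (-1:ℝ) ≠ 0)) _,
      Submodule.span_singleton_smul_eq (isUnit_iff_ne_zero.2 (neg_ne_zero.2 hr)) _]

lemma quad_line_factor_aux (a b c d e g p0 p1 q0 q1 : ℝ)
    (hne : p0 ≠ q0)
    (hvan : ∀ s : ℝ, Qf a b c d e g (p0+s*(q0-p0)) (p1+s*(q1-p1)) = 0) :
    ∃ m0 m1 m2 : ℝ, ∀ x y : ℝ,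
      Qf a b c d e g x y = Lf p0 p1 q0 q1 x y * (m0*x + m1*y + m2) := by
  have hA2 : a*(q0-p0)^2 + b*((q0-p0)*(q1-p1)) + c*(q1-p1)^2 = 0 := by
    have h0 := hvan 0; have h1 := hvan 1; have h2 := hvan (1/2)
    simp only [Qf] at h0 h1 h2
    linear_combination 2*h0 + 2*h1 - 4*h2
  have hB1 : 2*a*p0*(q0-p0) + b*(p0*(q1-p1)+p1*(q0-p0)) + 2*c*p1*(q1-p1)
      + d*(q0-p0) + e*(q1-p1) = 0 := by
    have h0 := hvan 0; have h1 := hvan 1; have h2 := hvan (1/2)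
    simp only [Qf] at h0 h1 h2
    linear_combination (-3)*h0 - h1 + 4*h2
  have hB0 : a*p0^2 + b*(p0*p1) + c*p1^2 + d*p0 + e*p1 + g = 0 := by
    have h0 := hvan 0; simp only [Qf] at h0; linear_combination h0
  have hw : q0 - p0 ≠ 0 := fun h => hne (by linarith)
  set wl : ℝ := -(q0-p0) with hwl
  set u : ℝ := q1-p1 with hu
  set t : ℝ := (q0-p0)*p1 - (q1-p1)*p0 with ht
  have hW : (q0-p0)^2 ≠ 0 := pow_ne_zero _ hw
  refine ⟨(b*wl-u*c)/(q0-p0)^2, (c*wl)/(q0-p0)^2, (e*wl-t*c)/(q0-p0)^2, fun x y => ?_⟩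
  have hsc : (q0-p0)^2 * Qf a b c d e g x y
      = Lf p0 p1 q0 q1 x y * ((b*wl-u*c)*x + (c*wl)*y + (e*wl-t*c)) := by
    simp only [Qf, Lf, hwl, hu, ht]
    linear_combination ((x-p0)^2)*hA2 + ((q0-p0)*(x-p0))*hB1 + ((q0-p0)^2)*hB0
  field_simp
  linear_combination hsc

lemma quad_line_factor (a b c d e g p0 p1 q0 q1 : ℝ)
    (hne : p0 ≠ q0 ∨ p1 ≠ q1)
    (hvan : ∀ s : ℝ, Qf a b c d e g (p0+s*(q0-p0)) (p1+s*(q1-p1)) = 0) :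
    ∃ m0 m1 m2 : ℝ, ∀ x y : ℝ,
      Qf a b c d e g x y = Lf p0 p1 q0 q1 x y * (m0*x + m1*y + m2) := by
  rcases hne with hne | hne
  · exact quad_line_factor_aux a b c d e g p0 p1 q0 q1 hne hvan
  · obtain ⟨m0, m1, m2, h⟩ := quad_line_factor_aux c b a e d g p1 p0 q1 q0 hne
      (fun s => by have := hvan s; simp only [Qf] at this ⊢; linear_combination this)
    refine ⟨-m1, -m0, -m2, fun x y => ?_⟩
    have := h y x
    simp only [Qf, Lf] at this ⊢
    linear_combination this

lemma lin_factor (m0 m1 m2 D0 D1 E0 E1 : ℝ)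
    (hD : m0*D0 + m1*D1 + m2 = 0) (hE : m0*E0 + m1*E1 + m2 = 0)
    (hne : D0 ≠ E0 ∨ D1 ≠ E1) :
    ∃ κ : ℝ, ∀ x y : ℝ, m0*x + m1*y + m2 = κ * Lf D0 D1 E0 E1 x y := by
  rcases hne with hne | hne
  · have hw : E0 - D0 ≠ 0 := fun h => hne (by linarith)
    refine ⟨-m1/(E0-D0), fun x y => ?_⟩
    simp only [Lf]
    field_simp
    linear_combination (E0 - x)*hD + (x - D0)*hE
  · have hw : E1 - D1 ≠ 0 := fun h => hne (by linarith)
    refine ⟨m0/(E1-D1), fun x y => ?_⟩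
    simp only [Lf]
    field_simp
    linear_combination (E1 - y)*hD + (y - D1)*hE

lemma key_lemma (A B i k p q l m : ℝ) (hlm : l ≠ m) (hpi : p ≠ i) (hpk : p ≠ k)
    (hAB : ¬ (A = 0 ∧ B = 0))
    (h1 : A*((l-i)*(l-k)) + B*((l-p)*(l-q)) = 0)
    (h2 : A*((m-i)*(m-k)) + B*((m-p)*(m-q)) = 0) :
    (q-l)*(q-m)*((p-i)*(p-k)) = (p-l)*(p-m)*((q-i)*(q-k)) := by
  have hlm' : l - m ≠ 0 := sub_ne_zero.2 hlm
  by_cases hS : A + B = 0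
  · by_cases hA : A = 0
    · exact absurd ⟨hA, by linarith [hS, hA]⟩ hAB
    · have hB : B = -A := by linarith
      subst hB
      have e1 : A*((p+q-i-k)*l + (i*k - p*q)) = 0 := by linear_combination h1
      have e2 : A*((p+q-i-k)*m + (i*k - p*q)) = 0 := by linear_combination h2
      have f1 : (p+q-i-k)*l + (i*k - p*q) = 0 := by
        rcases mul_eq_zero.1 e1 with h | h; exact absurd h hA; exact h
      have f2 : (p+q-i-k)*m + (i*k - p*q) = 0 := by
        rcases mul_eq_zero.1 e2 with h | h; exact absurd h hA; exact h
      have hsum : p+q-i-k = 0 := by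
        have h3 : (p+q-i-k)*(l-m) = 0 := by linear_combination f1 - f2
        rcases mul_eq_zero.1 h3 with h | h; exact h; exact absurd h hlm'
      have hprod : i*k - p*q = 0 := by linear_combination f1 - l*hsum
      have h4 : (p-i)*(p-k) = 0 := by linear_combination p*hsum + hprod
      rcases mul_eq_zero.1 h4 with h | h
      · exact absurd (by linarith : p = i) hpi
      · exact absurd (by linarith : p = k) hpk
  · by_cases hA : A = 0
    · have hB : B ≠ 0 := fun h => hAB ⟨hA, h⟩
      subst hA
      have f1 : (l-p)*(l-q) = 0 := by
        have h3 : B*((l-p)*(l-q)) = 0 := by linear_combination h1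
        rcases mul_eq_zero.1 h3 with h | h; exact absurd h hB; exact h
      have f2 : (m-p)*(m-q) = 0 := by
        have h3 : B*((m-p)*(m-q)) = 0 := by linear_combination h2
        rcases mul_eq_zero.1 h3 with h | h; exact absurd h hB; exact h
      have hL : (q-l)*(q-m) = 0 := by
        rcases mul_eq_zero.1 f1 with h | h
        · rcases mul_eq_zero.1 f2 with h' | h'
          · exact absurd (by linarith : l = m) hlm
          · have h5 : q - m = 0 := by linarith
            rw [h5]; ring
        · have h5 : q - l = 0 := by linarith
          rw [h5]; ring
      have hR : (p-l)*(p-m) = 0 := by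
        rcases mul_eq_zero.1 f1 with h | h
        · have h5 : p - l = 0 := by linarith
          rw [h5]; ring
        · rcases mul_eq_zero.1 f2 with h' | h'
          · have h5 : p - m = 0 := by linarith
            rw [h5]; ring
          · exact absurd (by linarith : l = m) hlm
      rw [hL, hR]; ring
    · have hβ : (A+B)*(l+m) - A*(i+k) - B*(p+q) = 0 := by
        have h3 : ((A+B)*(l+m) - A*(i+k) - B*(p+q))*(l-m) = 0 := by
          linear_combination h1 - h2
        rcases mul_eq_zero.1 h3 with h | h; exact h; exact absurd h hlm'
      have hγ : A*(i*k) + B*(p*q) - (A+B)*(l*m) = 0 := by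
        linear_combination h1 - l*hβ
      have hq' : (A+B)*((q-l)*(q-m)) = A*((q-i)*(q-k)) := by
        linear_combination (-q)*hβ - hγ
      have hp' : (A+B)*((p-l)*(p-m)) = A*((p-i)*(p-k)) := by
        linear_combination (-p)*hβ - hγ
      have hkey : A*(A+B)*((q-l)*(q-m)*((p-i)*(p-k)) - (p-l)*(p-m)*((q-i)*(q-k))) = 0 := by
        linear_combination (A*((p-i)*(p-k)))*hq' - (A*((q-i)*(q-k)))*hp'
      have hAS : A*(A+B) ≠ 0 := mul_ne_zero hA hS
      have h6 := (mul_eq_zero.1 hkey).resolve_left hAS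
      linarith [h6]

lemma pencil (a b c d e g B0 B1 C0 C1 D0 D1 E0 E1 : ℝ)
    (hqB : Qf a b c d e g B0 B1 = 0) (hqC : Qf a b c d e g C0 C1 = 0)
    (hqD : Qf a b c d e g D0 D1 = 0) (hqE : Qf a b c d e g E0 E1 = 0)
    (nBCE : (C0-B0)*(E1-B1) - (C1-B1)*(E0-B0) ≠ 0)
    (nBCD : (C0-B0)*(D1-B1) - (C1-B1)*(D0-B0) ≠ 0)
    (hDE : D0 ≠ E0 ∨ D1 ≠ E1) :
    ∃ κ μ : ℝ, ∀ x y : ℝ, Qf a b c d e g x y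
      = κ * (Lf B0 B1 C0 C1 x y * Lf D0 D1 E0 E1 x y)
        + μ * (Lf B0 B1 E0 E1 x y * Lf C0 C1 D0 D1 x y) := by
  set F0 : ℝ := (B0+C0)/2 with hF0
  set F1 : ℝ := (B1+C1)/2 with hF1
  have hden1 : Lf B0 B1 E0 E1 F0 F1 ≠ 0 := by
    simp only [Lf, hF0, hF1]
    intro h; apply nBCE; linear_combination 2*h
  have hden2 : Lf C0 C1 D0 D1 F0 F1 ≠ 0 := by
    simp only [Lf, hF0, hF1]
    intro h; apply nBCD; linear_combination -2*h
  set μ : ℝ := Qf a b c d e g F0 F1 / (Lf B0 B1 E0 E1 F0 F1 * Lf C0 C1 D0 D1 F0 F1) with hμ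
  set u1 : ℝ := E1-B1 with hu1
  set w1 : ℝ := -(E0-B0) with hw1
  set t1 : ℝ := (E0-B0)*B1 - (E1-B1)*B0 with ht1
  set u2 : ℝ := D1-C1 with hu2
  set w2 : ℝ := -(D0-C0) with hw2
  set t2 : ℝ := (D0-C0)*C1 - (D1-C1)*C0 with ht2
  have hQ' : ∀ x y : ℝ, Qf (a-μ*(u1*u2)) (b-μ*(u1*w2+u2*w1)) (c-μ*(w1*w2))
      (d-μ*(u1*t2+u2*t1)) (e-μ*(w1*t2+w2*t1)) (g-μ*(t1*t2)) x y
      = Qf a b c d e g x y - μ * (Lf B0 B1 E0 E1 x y * Lf C0 C1 D0 D1 x y) := by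
    intro x y
    simp only [Qf, Lf, hu1, hw1, ht1, hu2, hw2, ht2]
    ring
  have hB' : Qf (a-μ*(u1*u2)) (b-μ*(u1*w2+u2*w1)) (c-μ*(w1*w2))
      (d-μ*(u1*t2+u2*t1)) (e-μ*(w1*t2+w2*t1)) (g-μ*(t1*t2)) B0 B1 = 0 := by
    rw [hQ']
    have hz : Lf B0 B1 E0 E1 B0 B1 = 0 := by simp [Lf]
    rw [hz, hqB]; ring
  have hC' : Qf (a-μ*(u1*u2)) (b-μ*(u1*w2+u2*w1)) (c-μ*(w1*w2))
      (d-μ*(u1*t2+u2*t1)) (e-μ*(w1*t2+w2*t1)) (g-μ*(t1*t2)) C0 C1 = 0 := by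
    rw [hQ']
    have hz : Lf C0 C1 D0 D1 C0 C1 = 0 := by simp [Lf]
    rw [hz, hqC]; ring
  have hF' : Qf (a-μ*(u1*u2)) (b-μ*(u1*w2+u2*w1)) (c-μ*(w1*w2))
      (d-μ*(u1*t2+u2*t1)) (e-μ*(w1*t2+w2*t1)) (g-μ*(t1*t2)) F0 F1 = 0 := by
    rw [hQ', hμ, div_mul_cancel₀ _ (mul_ne_zero hden1 hden2), sub_self]
  have hBC : B0 ≠ C0 ∨ B1 ≠ C1 := by
    by_contra hc
    push_neg at hc
    apply nBCE
    rw [hc.1, hc.2]; ring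
  have hvan : ∀ s : ℝ, Qf (a-μ*(u1*u2)) (b-μ*(u1*w2+u2*w1)) (c-μ*(w1*w2))
      (d-μ*(u1*t2+u2*t1)) (e-μ*(w1*t2+w2*t1)) (g-μ*(t1*t2))
      (B0+s*(C0-B0)) (B1+s*(C1-B1)) = 0 := by
    intro s
    simp only [Qf, hF0, hF1] at hB' hC' hF' ⊢
    linear_combination ((s-1)*(2*s-1))*hB' + (s*(2*s-1))*hC' + (4*s*(1-s))*hF'
  obtain ⟨m0, m1, m2, hfac⟩ := quad_line_factor _ _ _ _ _ _ _ _ _ _ hBC hvan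
  have hLBCD : Lf B0 B1 C0 C1 D0 D1 ≠ 0 := by
    simp only [Lf]; intro h; apply nBCD; linear_combination -h
  have hLBCE : Lf B0 B1 C0 C1 E0 E1 ≠ 0 := by
    simp only [Lf]; intro h; apply nBCE; linear_combination -h
  have hmD : m0*D0 + m1*D1 + m2 = 0 := by
    have h1 := hfac D0 D1
    rw [hQ'] at h1
    have hz : Lf C0 C1 D0 D1 D0 D1 = 0 := by simp [Lf]; ring
    rw [hz, hqD] at h1
    have h2 : Lf B0 B1 C0 C1 D0 D1 * (m0*D0 + m1*D1 + m2) = 0 := by linear_combination -h1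
    exact (mul_eq_zero.1 h2).resolve_left hLBCD
  have hmE : m0*E0 + m1*E1 + m2 = 0 := by
    have h1 := hfac E0 E1
    rw [hQ'] at h1
    have hz : Lf B0 B1 E0 E1 E0 E1 = 0 := by simp [Lf]; ring
    rw [hz, hqE] at h1
    have h2 : Lf B0 B1 C0 C1 E0 E1 * (m0*E0 + m1*E1 + m2) = 0 := by linear_combination -h1
    exact (mul_eq_zero.1 h2).resolve_left hLBCE
  obtain ⟨κ, hκ⟩ := lin_factor m0 m1 m2 D0 D1 E0 E1 hmD hmE hDE
  refine ⟨κ, μ, fun x y => ?_⟩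
  have h1 := hfac x y
  rw [hQ', hκ x y] at h1
  linear_combination h1

lemma mem_sides_BC (B C D E : Pt) : lineThrough B C ∈ sides B C D E :=
  Set.mem_insert _ _
lemma mem_sides_DE (B C D E : Pt) : lineThrough D E ∈ sides B C D E :=
  Set.mem_insert_of_mem _ (Set.mem_insert _ _)
lemma mem_sides_BE (B C D E : Pt) : lineThrough B E ∈ sides B C D E :=
  Set.mem_insert_of_mem _ (Set.mem_insert_of_mem _ (Set.mem_insert _ _))
lemma mem_sides_CD (B C D E : Pt) : lineThrough C D ∈ sides B C D E :=
  Set.mem_insert_of_mem _ (Set.mem_insert_of_mem _ (Set.mem_insert_of_mem _ (Set.mem_insert _ _)))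

set_option maxHeartbeats 1000000 in
/-- Desargues' involution theorem for a pencil of conics. -/
theorem desargues_involution_conic
    (a b c d e g : ℝ) (habc : (a, b, c) ≠ ((0 : ℝ), (0 : ℝ), (0 : ℝ)))
    (𝒞 : Set Pt)
    (h𝒞 : 𝒞 = {X : Pt | a * X 0 ^ 2 + b * (X 0 * X 1) + c * X 1 ^ 2
                  + d * X 0 + e * X 1 + g = 0})
    (B C D E : Pt)
    (hB : B ∈ 𝒞) (hC : C ∈ 𝒞) (hD : D ∈ 𝒞) (hE : E ∈ 𝒞)
    (hdist : List.Pairwise (· ≠ ·) [B, C, D, E])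
    (hBCD : ¬ Collinear ℝ ({B, C, D} : Set Pt))
    (hBCE : ¬ Collinear ℝ ({B, C, E} : Set Pt))
    (hBDE : ¬ Collinear ℝ ({B, D, E} : Set Pt))
    (hCDE : ¬ Collinear ℝ ({C, D, E} : Set Pt))
    (Δ : AffineSubspace ℝ Pt) (hΔ : IsLine Δ)
    (hnpar : ∀ s ∈ sides B C D E, ¬ AffineSubspace.Parallel Δ s)
    (havoid : ∀ s₁ ∈ sides B C D E, ∀ s₂ ∈ sides B C D E, s₁ ≠ s₂ →
      ∀ X : Pt, X ∈ s₁ → X ∈ s₂ → X ∉ Δ)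
    (L M : Pt) (hLM : L ≠ M)
    (hL : L ∈ 𝒞 ∧ L ∈ Δ) (hM : M ∈ 𝒞 ∧ M ∈ Δ)
    (I K P Q : Pt)
    (hI : I ∈ Δ ∧ I ∈ lineThrough B C)
    (hK : K ∈ Δ ∧ K ∈ lineThrough D E)
    (hP : P ∈ Δ ∧ P ∈ lineThrough B E)
    (hQ : Q ∈ Δ ∧ Q ∈ lineThrough C D) :
    dist Q L * dist Q M * dist P I * dist P K
      = dist P L * dist P M * dist Q I * dist Q K := by
  subst h𝒞
  obtain ⟨X, Y, hXY, hΔeq⟩ := hΔ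
  subst hΔeq
  -- pairwise distinctness
  obtain ⟨hBd, hdist⟩ := List.pairwise_cons.1 hdist
  obtain ⟨hCd, hdist⟩ := List.pairwise_cons.1 hdist
  obtain ⟨hDd, -⟩ := List.pairwise_cons.1 hdist
  have hBCne : B ≠ C := hBd C (by simp)
  have hBEne : B ≠ E := hBd E (by simp)
  have hCDne : C ≠ D := hCd D (by simp)
  have hDEne : D ≠ E := hDd E (by simp)
  -- conic equations
  have hqB : Qf a b c d e g (B 0) (B 1) = 0 := by
    have h := hB; simp only [Set.mem_setOf_eq] at h; simp only [Qf]; linear_combination h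
  have hqC : Qf a b c d e g (C 0) (C 1) = 0 := by
    have h := hC; simp only [Set.mem_setOf_eq] at h; simp only [Qf]; linear_combination h
  have hqD : Qf a b c d e g (D 0) (D 1) = 0 := by
    have h := hD; simp only [Set.mem_setOf_eq] at h; simp only [Qf]; linear_combination h
  have hqE : Qf a b c d e g (E 0) (E 1) = 0 := by
    have h := hE; simp only [Set.mem_setOf_eq] at h; simp only [Qf]; linear_combination h
  have hqL : Qf a b c d e g (L 0) (L 1) = 0 := by
    have h := hL.1; simp only [Set.mem_setOf_eq] at h; simp only [Qf]; linear_combination h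
  have hqM : Qf a b c d e g (M 0) (M 1) = 0 := by
    have h := hM.1; simp only [Set.mem_setOf_eq] at h; simp only [Qf]; linear_combination h
  -- noncollinearity in coordinates
  have nBCE : (C 0 - B 0)*(E 1 - B 1) - (C 1 - B 1)*(E 0 - B 0) ≠ 0 :=
    fun h => hBCE (collinear_of_cross B C E h)
  have nBCD : (C 0 - B 0)*(D 1 - B 1) - (C 1 - B 1)*(D 0 - B 0) ≠ 0 :=
    fun h => hBCD (collinear_of_cross B C D h)
  -- the pencil identity
  obtain ⟨κ, μ, hpen⟩ := pencil a b c d e g (B 0) (B 1) (C 0) (C 1) (D 0) (D 1) (E 0) (E 1)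
    hqB hqC hqD hqE nBCE nBCD (pt_ne_coords hDEne)
  -- parameters of the six points on Δ
  obtain ⟨l, hLrep⟩ := mem_lineThrough_iff.1 hL.2
  obtain ⟨m, hMrep⟩ := mem_lineThrough_iff.1 hM.2
  obtain ⟨i, hIrep⟩ := mem_lineThrough_iff.1 hI.1
  obtain ⟨k, hKrep⟩ := mem_lineThrough_iff.1 hK.1
  obtain ⟨p, hPrep⟩ := mem_lineThrough_iff.1 hP.1
  obtain ⟨q, hQrep⟩ := mem_lineThrough_iff.1 hQ.1
  obtain ⟨hL0, hL1⟩ := rep_coord hLrep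
  obtain ⟨hM0, hM1⟩ := rep_coord hMrep
  obtain ⟨hI0, hI1⟩ := rep_coord hIrep
  obtain ⟨hK0, hK1⟩ := rep_coord hKrep
  obtain ⟨hP0, hP1⟩ := rep_coord hPrep
  obtain ⟨hQ0, hQ1⟩ := rep_coord hQrep
  -- I, K, P, Q lie on the respective side lines
  obtain ⟨sI, hIbcrep⟩ := mem_lineThrough_iff.1 hI.2
  obtain ⟨sK, hKderep⟩ := mem_lineThrough_iff.1 hK.2
  obtain ⟨sP, hPberep⟩ := mem_lineThrough_iff.1 hP.2
  obtain ⟨sQ, hQcdrep⟩ := mem_lineThrough_iff.1 hQ.2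
  obtain ⟨hIbc0, hIbc1⟩ := rep_coord hIbcrep
  obtain ⟨hKde0, hKde1⟩ := rep_coord hKderep
  obtain ⟨hPbe0, hPbe1⟩ := rep_coord hPberep
  obtain ⟨hQcd0, hQcd1⟩ := rep_coord hQcdrep
  have hIbc : Lf (B 0) (B 1) (C 0) (C 1) (I 0) (I 1) = 0 := by
    simp only [Lf]; rw [hIbc0, hIbc1]; ring
  have hKde : Lf (D 0) (D 1) (E 0) (E 1) (K 0) (K 1) = 0 := by
    simp only [Lf]; rw [hKde0, hKde1]; ring
  have hPbe : Lf (B 0) (B 1) (E 0) (E 1) (P 0) (P 1) = 0 := by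
    simp only [Lf]; rw [hPbe0, hPbe1]; ring
  have hQcd : Lf (C 0) (C 1) (D 0) (D 1) (Q 0) (Q 1) = 0 := by
    simp only [Lf]; rw [hQcd0, hQcd1]; ring
  rw [hI0, hI1] at hIbc
  rw [hK0, hK1] at hKde
  rw [hP0, hP1] at hPbe
  rw [hQ0, hQ1] at hQcd
  -- slopes of the side lines along Δ
  set c1 : ℝ := (C 1 - B 1)*(Y 0 - X 0) - (C 0 - B 0)*(Y 1 - X 1) with hc1def
  set c2 : ℝ := (E 1 - D 1)*(Y 0 - X 0) - (E 0 - D 0)*(Y 1 - X 1) with hc2def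
  set c3 : ℝ := (E 1 - B 1)*(Y 0 - X 0) - (E 0 - B 0)*(Y 1 - X 1) with hc3def
  set c4 : ℝ := (D 1 - C 1)*(Y 0 - X 0) - (D 0 - C 0)*(Y 1 - X 1) with hc4def
  have hc1 : c1 ≠ 0 := by
    intro h
    rw [hc1def] at h
    exact hnpar (lineThrough B C) (mem_sides_BC B C D E)
      (par_of_cross X Y B C hXY hBCne (by linear_combination h))
  have hc2 : c2 ≠ 0 := by
    intro h
    rw [hc2def] at h
    exact hnpar (lineThrough D E) (mem_sides_DE B C D E)
      (par_of_cross X Y D E hXY hDEne (by linear_combination h))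
  have hc3 : c3 ≠ 0 := by
    intro h
    rw [hc3def] at h
    exact hnpar (lineThrough B E) (mem_sides_BE B C D E)
      (par_of_cross X Y B E hXY hBEne (by linear_combination h))
  have hc4 : c4 ≠ 0 := by
    intro h
    rw [hc4def] at h
    exact hnpar (lineThrough C D) (mem_sides_CD B C D E)
      (par_of_cross X Y C D hXY hCDne (by linear_combination h))
  -- values of the four line functionals at L and M
  have eL1 : Lf (B 0) (B 1) (C 0) (C 1) (L 0) (L 1) = c1 * (l - i) := by
    simp only [Lf] at hIbc ⊢; rw [hL0, hL1, hc1def]; linear_combination hIbc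
  have eL2 : Lf (D 0) (D 1) (E 0) (E 1) (L 0) (L 1) = c2 * (l - k) := by
    simp only [Lf] at hKde ⊢; rw [hL0, hL1, hc2def]; linear_combination hKde
  have eL3 : Lf (B 0) (B 1) (E 0) (E 1) (L 0) (L 1) = c3 * (l - p) := by
    simp only [Lf] at hPbe ⊢; rw [hL0, hL1, hc3def]; linear_combination hPbe
  have eL4 : Lf (C 0) (C 1) (D 0) (D 1) (L 0) (L 1) = c4 * (l - q) := by
    simp only [Lf] at hQcd ⊢; rw [hL0, hL1, hc4def]; linear_combination hQcd
  have eM1 : Lf (B 0) (B 1) (C 0) (C 1) (M 0) (M 1) = c1 * (m - i) := by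
    simp only [Lf] at hIbc ⊢; rw [hM0, hM1, hc1def]; linear_combination hIbc
  have eM2 : Lf (D 0) (D 1) (E 0) (E 1) (M 0) (M 1) = c2 * (m - k) := by
    simp only [Lf] at hKde ⊢; rw [hM0, hM1, hc2def]; linear_combination hKde
  have eM3 : Lf (B 0) (B 1) (E 0) (E 1) (M 0) (M 1) = c3 * (m - p) := by
    simp only [Lf] at hPbe ⊢; rw [hM0, hM1, hc3def]; linear_combination hPbe
  have eM4 : Lf (C 0) (C 1) (D 0) (D 1) (M 0) (M 1) = c4 * (m - q) := by
    simp only [Lf] at hQcd ⊢; rw [hM0, hM1, hc4def]; linear_combination hQcd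
  have hpenL := hpen (L 0) (L 1)
  rw [eL1, eL2, eL3, eL4, hqL] at hpenL
  have hpenM := hpen (M 0) (M 1)
  rw [eM1, eM2, eM3, eM4, hqM] at hpenM
  have h1 : (κ*(c1*c2))*((l-i)*(l-k)) + (μ*(c3*c4))*((l-p)*(l-q)) = 0 := by
    linear_combination -hpenL
  have h2 : (κ*(c1*c2))*((m-i)*(m-k)) + (μ*(c3*c4))*((m-p)*(m-q)) = 0 := by
    linear_combination -hpenM
  -- distinctness of parameters
  have hlmne : l ≠ m := by
    intro h; apply hLM; rw [hLrep, hMrep, h]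
  have hpine : p ≠ i := by
    intro h
    have hPI : P = I := by rw [hPrep, hIrep, h]
    have hlinea : lineThrough B E ≠ lineThrough B C := by
      intro hEq
      apply hBCE
      have hE' : E ∈ lineThrough B C := by rw [← hEq]; exact right_mem_lineThrough B E
      have hcol := collinear_of_mem_line hE'
      have hset : ({E, B, C} : Set Pt) = {B, C, E} := by
        ext z; simp only [Set.mem_insert_iff, Set.mem_singleton_iff]; tauto
      rwa [hset] at hcol
    exact havoid (lineThrough B E) (mem_sides_BE B C D E) (lineThrough B C) (mem_sides_BC B C D E)
      hlinea P hP.2 (by rw [hPI]; exact hI.2) hP.1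
  have hpkne : p ≠ k := by
    intro h
    have hPK : P = K := by rw [hPrep, hKrep, h]
    have hlinea : lineThrough B E ≠ lineThrough D E := by
      intro hEq
      apply hBDE
      have hB' : B ∈ lineThrough D E := by rw [← hEq]; exact left_mem_lineThrough B E
      exact collinear_of_mem_line hB'
    exact havoid (lineThrough B E) (mem_sides_BE B C D E) (lineThrough D E) (mem_sides_DE B C D E)
      hlinea P hP.2 (by rw [hPK]; exact hK.2) hP.1
  -- the leading coefficients do not vanish simultaneously
  have hABne : ¬ ((κ*(c1*c2)) = 0 ∧ (μ*(c3*c4)) = 0) := by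
    rintro ⟨hA0, hB0⟩
    have hκ0 : κ = 0 := by
      rcases mul_eq_zero.1 hA0 with h | h
      · exact h
      · exact absurd h (mul_ne_zero hc1 hc2)
    have hμ0 : μ = 0 := by
      rcases mul_eq_zero.1 hB0 with h | h
      · exact h
      · exact absurd h (mul_ne_zero hc3 hc4)
    have hzero : ∀ x y : ℝ, Qf a b c d e g x y = 0 := fun x y => by
      rw [hpen x y, hκ0, hμ0]; ring
    have e00 := hzero 0 0
    have e10 := hzero 1 0
    have e20 := hzero 2 0
    have e01 := hzero 0 1
    have e02 := hzero 0 2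
    have e11 := hzero 1 1
    simp only [Qf] at e00 e10 e20 e01 e02 e11
    norm_num at e00 e10 e20 e01 e02 e11
    apply habc
    have ha : a = 0 := by linarith
    have hbz : c = 0 := by linarith
    have hcz : b = 0 := by linarith
    rw [ha, hbz, hcz]
  have keyres := key_lemma (κ*(c1*c2)) (μ*(c3*c4)) i k p q l m hlmne hpine hpkne hABne h1 h2
  -- convert to distances
  have dQL : dist Q L = |q - l| * ‖Y - X‖ := by rw [hQrep, hLrep]; exact dist_param X (Y - X) q l
  have dQM : dist Q M = |q - m| * ‖Y - X‖ := by rw [hQrep, hMrep]; exact dist_param X (Y - X) q m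
  have dPI : dist P I = |p - i| * ‖Y - X‖ := by rw [hPrep, hIrep]; exact dist_param X (Y - X) p i
  have dPK : dist P K = |p - k| * ‖Y - X‖ := by rw [hPrep, hKrep]; exact dist_param X (Y - X) p k
  have dPL : dist P L = |p - l| * ‖Y - X‖ := by rw [hPrep, hLrep]; exact dist_param X (Y - X) p l
  have dPM : dist P M = |p - m| * ‖Y - X‖ := by rw [hPrep, hMrep]; exact dist_param X (Y - X) p m
  have dQI : dist Q I = |q - i| * ‖Y - X‖ := by rw [hQrep, hIrep]; exact dist_param X (Y - X) q i
  have dQK : dist Q K = |q - k| * ‖Y - X‖ := by rw [hQrep, hKrep]; exact dist_param X (Y - X) q k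
  rw [dQL, dQM, dPI, dPK, dPL, dPM, dQI, dQK]
  have habs : |(q-l)*(q-m)*((p-i)*(p-k))| = |(p-l)*(p-m)*((q-i)*(q-k))| := by rw [keyres]
  calc (|q - l| * ‖Y - X‖) * (|q - m| * ‖Y - X‖) * (|p - i| * ‖Y - X‖) * (|p - k| * ‖Y - X‖)
      = |(q-l)*(q-m)*((p-i)*(p-k))| * ‖Y - X‖^4 := by
        rw [abs_mul, abs_mul, abs_mul]; ring
    _ = |(p-l)*(p-m)*((q-i)*(q-k))| * ‖Y - X‖^4 := by rw [habs]
    _ = (|p - l| * ‖Y - X‖) * (|p - m| * ‖Y - X‖) * (|q - i| * ‖Y - X‖) * (|q - k| * ‖Y - X‖) := by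
        rw [abs_mul, abs_mul, abs_mul]; ring
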